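/- arXiv:2311.07629 — 2 statements merged into one kernel-verified Lean document; each statement's English description precedes it below -/
import Mathlib

section
/- For every ε > 0 there exists N such that for all n ≥ N the following holds: if G is a d-regular simple graph on n vertices with 1 ≤ d ≤ n^(2/3), then the second largest eigenvalue λ₂ of the adjacency matrix of G satisfies λ₂ ≥ (1 - ε) · √d / 2. -/
open scoped Classical

open Finset Matrix

lemma trace_pow_eq_sum_eigenvalues {m : ℕ} {A : Matrix (Fin m) (Fin m) ℝ}
    (hA : A.IsHermitian) (k : ℕ) :
    (A ^ k).trace = ∑ i, hA.eigenvalues i ^ k := by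
  set U : Matrix (Fin m) (Fin m) ℝ := (hA.eigenvectorUnitary : Matrix (Fin m) (Fin m) ℝ) with hUdef
  set D : Matrix (Fin m) (Fin m) ℝ := Matrix.diagonal (RCLike.ofReal ∘ hA.eigenvalues) with hDdef
  have h2 : star U * U = 1 := Matrix.mem_unitaryGroup_iff'.mp hA.eigenvectorUnitary.2
  have h1 : U * star U = 1 := Matrix.mem_unitaryGroup_iff.mp hA.eigenvectorUnitary.2
  have hk : ∀ j : ℕ, A ^ j = U * D ^ j * star U := by
    intro j
    induction j with
    | zero => simp [h1]
    | succ j ih =>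
      rw [pow_succ, ih, hA.spectral_theorem]
      simp only [Unitary.conjStarAlgAut_apply, ← hUdef, ← hDdef, Matrix.mul_assoc]
      rw [← Matrix.mul_assoc (star U) U, h2, Matrix.one_mul, ← Matrix.mul_assoc (D^j) D,
        ← pow_succ]
  rw [hk k, Matrix.trace_mul_cycle, h2, Matrix.one_mul,
    Matrix.diagonal_pow, Matrix.trace_diagonal]
  simp

lemma adj_row_sum {m d : ℕ} {G : SimpleGraph (Fin m)} [DecidableRel G.Adj]
    (hreg : G.IsRegularOfDegree d) (j : Fin m) :
    ∑ k, G.adjMatrix ℝ j k = d := by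
  have := SimpleGraph.adjMatrix_mulVec_const_apply_of_regular (α := ℝ) (a := 1) (v := j) hreg
  simpa [Matrix.mulVec, dotProduct] using this

lemma eig_abs_le {m d : ℕ} {G : SimpleGraph (Fin m)} [DecidableRel G.Adj]
    (hA : (G.adjMatrix ℝ).IsHermitian) (hreg : G.IsRegularOfDegree d) (i : Fin m) :
    |hA.eigenvalues i| ≤ d := by
  set v := hA.eigenvectorBasis i with hv
  have hev : G.adjMatrix ℝ *ᵥ ⇑v = hA.eigenvalues i • ⇑v := hA.mulVec_eigenvectorBasis i
  have hv0 : v ≠ 0 := hA.eigenvectorBasis.orthonormal.ne_zero i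
  obtain ⟨j0, hj0⟩ : ∃ j, v j ≠ 0 := by
    by_contra h
    push_neg at h
    exact hv0 (by ext j; simpa using h j)
  obtain ⟨j, -, hj⟩ := Finset.exists_max_image Finset.univ (fun k => |v k|) ⟨j0, mem_univ _⟩
  have hjpos : 0 < |v j| := lt_of_lt_of_le (abs_pos.2 hj0) (hj j0 (mem_univ _))
  have h1 : hA.eigenvalues i * v j = ∑ k, G.adjMatrix ℝ j k * v k := by
    have h := congrFun hev j
    simp only [Matrix.mulVec, dotProduct, Pi.smul_apply, smul_eq_mul] at h
    exact h.symm
  have key : |hA.eigenvalues i| * |v j| ≤ (d : ℝ) * |v j| := by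
    rw [← abs_mul, h1]
    calc |∑ k, G.adjMatrix ℝ j k * v k| ≤ ∑ k, |G.adjMatrix ℝ j k * v k| :=
          Finset.abs_sum_le_sum_abs _ _
      _ ≤ ∑ k, G.adjMatrix ℝ j k * |v j| := by
          refine Finset.sum_le_sum fun k _ => ?_
          rw [abs_mul, abs_of_nonneg (by simp [SimpleGraph.adjMatrix_apply]; positivity :
            (0:ℝ) ≤ G.adjMatrix ℝ j k)]
          exact mul_le_mul_of_nonneg_left (hj k (mem_univ _))
            (by simp [SimpleGraph.adjMatrix_apply]; positivity)
      _ = (∑ k, G.adjMatrix ℝ j k) * |v j| := by rw [Finset.sum_mul]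
      _ = (d : ℝ) * |v j| := by rw [adj_row_sum hreg]
  exact le_of_mul_le_mul_right key hjpos

variable {m d : ℕ} {G : SimpleGraph (Fin m)} [DecidableRel G.Adj]

lemma adj_entry_nonneg (i j : Fin m) : (0:ℝ) ≤ G.adjMatrix ℝ i j := by
  simp [SimpleGraph.adjMatrix_apply]; positivity

lemma adj_pow_nonneg (k : ℕ) (i j : Fin m) : (0:ℝ) ≤ (G.adjMatrix ℝ ^ k) i j := by
  induction k generalizing i j with
  | zero => simp [Matrix.one_apply]; positivity
  | succ k ih =>
    rw [pow_succ, Matrix.mul_apply]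
    exact Finset.sum_nonneg fun l _ => mul_nonneg (ih i l) (adj_entry_nonneg l j)

lemma trace_adj_sq (hreg : G.IsRegularOfDegree d) :
    (G.adjMatrix ℝ ^ 2).trace = (m : ℝ) * d := by
  rw [Matrix.trace]
  have : ∀ i : Fin m, (G.adjMatrix ℝ ^ 2).diag i = (d : ℝ) := by
    intro i
    rw [Matrix.diag_apply, pow_two]
    rw [SimpleGraph.adjMatrix_mul_self_apply_self, hreg i]
  rw [Finset.sum_congr rfl fun i _ => this i]
  simp [mul_comm]

lemma trace_adj_cube_nonneg : (0:ℝ) ≤ (G.adjMatrix ℝ ^ 3).trace :=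
  Finset.sum_nonneg fun i _ => adj_pow_nonneg 3 i i

lemma adj_sq_row_sum (hreg : G.IsRegularOfDegree d) (i : Fin m) :
    ∑ j, (G.adjMatrix ℝ ^ 2) i j = (d : ℝ) ^ 2 := by
  have : ∀ j, (G.adjMatrix ℝ ^ 2) i j = ∑ k, G.adjMatrix ℝ i k * G.adjMatrix ℝ k j := by
    intro j; rw [pow_two, Matrix.mul_apply]
  rw [Finset.sum_congr rfl fun j _ => this j, Finset.sum_comm]
  have hrow : ∀ k, ∑ j, G.adjMatrix ℝ i k * G.adjMatrix ℝ k j = G.adjMatrix ℝ i k * d := by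
    intro k; rw [← Finset.mul_sum, adj_row_sum hreg]
  rw [Finset.sum_congr rfl fun k _ => hrow k, ← Finset.sum_mul, adj_row_sum hreg]
  ring

variable {m d : ℕ} {G : SimpleGraph (Fin m)} [DecidableRel G.Adj]

lemma trace_adj_pow4_ge (hm : 2 ≤ m) (hreg : G.IsRegularOfDegree d) :
    (m:ℝ) * d^2 + ((d:ℝ)^2 - d)^2 ≤ (G.adjMatrix ℝ ^ 4).trace := by
  set B : Matrix (Fin m) (Fin m) ℝ := G.adjMatrix ℝ ^ 2 with hB
  have hsymm : ∀ i j : Fin m, B j i = B i j := by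
    intro i j
    have h := (G.isSymm_adjMatrix (α := ℝ)).pow 2
    calc B j i = Bᵀ i j := rfl
      _ = B i j := by rw [hB, h]
  have hdiag : ∀ i : Fin m, B i i = (d:ℝ) := by
    intro i
    rw [hB, pow_two, SimpleGraph.adjMatrix_mul_self_apply_self, hreg i]
  have hrow : ∀ i : Fin m, ∑ j, B i j = (d:ℝ)^2 := fun i => adj_sq_row_sum hreg i
  have htr : (G.adjMatrix ℝ ^ 4).trace = ∑ p ∈ univ ×ˢ univ, (B p.1 p.2)^2 := by
    have h4 : G.adjMatrix ℝ ^ 4 = B * B := by rw [hB, ← pow_add]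
    rw [h4, Matrix.trace, Finset.sum_product]
    refine Finset.sum_congr rfl fun i _ => ?_
    rw [Matrix.diag_apply, Matrix.mul_apply]
    exact Finset.sum_congr rfl fun j _ => by rw [hsymm i j, pow_two]
  have hsplit : ∑ p ∈ univ ×ˢ univ, (B p.1 p.2)^2
      = ∑ p ∈ (univ : Finset (Fin m)).diag, (B p.1 p.2)^2
        + ∑ p ∈ (univ : Finset (Fin m)).offDiag, (B p.1 p.2)^2 := by
    rw [← Finset.sum_union (Finset.disjoint_diag_offDiag _), Finset.diag_union_offDiag]
  have hdiagsum : ∑ p ∈ (univ : Finset (Fin m)).diag, (B p.1 p.2)^2 = (m:ℝ) * d^2 := by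
    rw [Finset.sum_diag]
    rw [Finset.sum_congr rfl fun i _ => by rw [hdiag i]]
    simp [mul_comm]
  have hoffsum : ∑ p ∈ (univ : Finset (Fin m)).offDiag, B p.1 p.2
      = (m:ℝ) * d^2 - m * d := by
    have h1 : ∑ p ∈ univ ×ˢ univ, B p.1 p.2 = (m:ℝ) * d^2 := by
      rw [Finset.sum_product, Finset.sum_congr rfl fun i _ => hrow i]
      simp [mul_comm]
    have h2 : ∑ p ∈ (univ : Finset (Fin m)).diag, B p.1 p.2 = (m:ℝ) * d := by
      rw [Finset.sum_diag, Finset.sum_congr rfl fun i _ => hdiag i]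
      simp [mul_comm]
    have := hsplit
    have h3 : ∑ p ∈ univ ×ˢ univ, B p.1 p.2
        = ∑ p ∈ (univ : Finset (Fin m)).diag, B p.1 p.2
          + ∑ p ∈ (univ : Finset (Fin m)).offDiag, B p.1 p.2 := by
      rw [← Finset.sum_union (Finset.disjoint_diag_offDiag _), Finset.diag_union_offDiag]
    linarith [h3, h1, h2]
  have hcard : ((univ : Finset (Fin m)).offDiag.card : ℝ) = (m:ℝ)^2 - m := by
    rw [Finset.offDiag_card, Finset.card_univ, Fintype.card_fin]
    have : (m:ℕ) ≤ m * m := Nat.le_mul_of_pos_left m (by omega)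
    push_cast [Nat.cast_sub this]
    ring
  have hCS : (∑ p ∈ (univ : Finset (Fin m)).offDiag, B p.1 p.2)^2
      ≤ ((univ : Finset (Fin m)).offDiag.card : ℝ)
        * ∑ p ∈ (univ : Finset (Fin m)).offDiag, (B p.1 p.2)^2 :=
    sq_sum_le_card_mul_sum_sq
  rw [htr, hsplit, hdiagsum]
  have hmpos : (0:ℝ) < (m:ℝ)^2 := by positivity
  rw [hoffsum, hcard] at hCS
  have hoffnonneg : (0:ℝ) ≤ ∑ p ∈ (univ : Finset (Fin m)).offDiag, (B p.1 p.2)^2 :=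
    Finset.sum_nonneg fun p _ => sq_nonneg _
  have hm2 : (2:ℝ) ≤ (m:ℝ) := by exact_mod_cast hm
  nlinarith [hCS, hoffnonneg, hm2, sq_nonneg ((d:ℝ)^2 - d)]


lemma caseA_aux {q n t : ℝ} (hq0 : 0 ≤ q) (hq1 : 1 ≤ q) (hn0 : 0 ≤ n)
    (hq99 : q ^ 2 ≤ 99) (hn2 : 20000 ≤ n) (ht : t ≤ q / 2) (htg : -(q^2) ≤ t)
    (H : n * (q^2)^2 + ((q^2)^2 - q^2)^2
      + ((8/5*q)^2 + 2*(8/5*q)*(q^2 - t) - t*q^2) * (n * q^2)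
      + n * (-((8/5*q)^2) * t * q^2)
      ≤ (q^2 - t) * (2*q^2) * (q^2 + 8/5*q) ^ 2) : False := by
  revert H
  have hq10 : q ≤ 10 := by nlinarith [sq_nonneg (q - 10)]
  have b1 : q^2 - t ≤ 2*q^2 := by linarith
  have b2 : q^2 + 8/5*q ≤ 13/5 * q^2 := by nlinarith
  have b3 : (q^2 + 8/5*q)^2 ≤ (13/5 * q^2)^2 := by nlinarith
  have hjunk : (q^2 - t) * (2*q^2) * (q^2 + 8/5*q) ^ 2 ≤ 676/25 * q^8 := by
    calc (q^2 - t) * (2*q^2) * (q^2 + 8/5*q) ^ 2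
        ≤ (2*q^2) * (2*q^2) * (q^2 + 8/5*q) ^ 2 := by
          apply mul_le_mul_of_nonneg_right _ (sq_nonneg _)
          apply mul_le_mul_of_nonneg_right b1 (by positivity)
      _ ≤ (2*q^2) * (2*q^2) * (13/5 * q^2) ^ 2 := by
          apply mul_le_mul_of_nonneg_left b3 (by positivity)
      _ = 676/25 * q^8 := by ring
  have hcoef : 0 ≤ n * ((q/2 - t) * (q^2 * (16/5*q + q^2 + 64/25*q^2))) := by
    apply mul_nonneg hn0
    apply mul_nonneg (by linarith)
    positivity
  have hq3b : q^3 ≤ 990 := by nlinarith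
  have htail : 676/25 * q^8 < n * (71/50 * q^5 + 49/25 * q^4) := by
    have h8 : q^8 ≤ 990 * q^5 := by
      have h := mul_le_mul_of_nonneg_left hq3b (pow_nonneg hq0 5)
      nlinarith [h]
    have h5 : (0:ℝ) < q^5 := by positivity
    have h4 : (0:ℝ) < q^4 := by positivity
    calc 676/25 * q^8 ≤ 676/25 * (990 * q^5) := by linarith
      _ < 20000 * (71/50 * q^5 + 49/25 * q^4) := by nlinarith
      _ ≤ n * (71/50 * q^5 + 49/25 * q^4) := by
          apply mul_le_mul_of_nonneg_right hn2 (by positivity)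
  intro H
  linarith [H, hjunk, hcoef, htail, sq_nonneg ((q^2)^2 - q^2)]

lemma caseB_aux {q n t : ℝ} (hq0 : 0 ≤ q) (hn0 : 0 ≤ n)
    (hd100 : 100 ≤ q ^ 2) (hqn : q^3 ≤ n) (ht : t ≤ q / 2) (htg : -(q^2) ≤ t)
    (H : n * (q^2)^2 + ((q^2)^2 - q^2)^2
      + ((8/5*q)^2 + 2*(8/5*q)*(q^2 - t) - t*q^2) * (n * q^2)
      + n * (-((8/5*q)^2) * t * q^2)
      ≤ (q^2 - t) * (2*q^2) * (q^2 + 8/5*q) ^ 2) : False := by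
  revert H
  have hq10 : (10:ℝ) ≤ q := by nlinarith [sq_nonneg (q - 10), sq_nonneg (q + 10)]
  have p76 : 10 * q^6 ≤ q^7 := by
    nlinarith [mul_nonneg (pow_nonneg hq0 6) (by linarith : (0:ℝ) ≤ q - 10)]
  have p65 : 10 * q^5 ≤ q^6 := by
    nlinarith [mul_nonneg (pow_nonneg hq0 5) (by linarith : (0:ℝ) ≤ q - 10)]
  have p54 : 10 * q^4 ≤ q^5 := by
    nlinarith [mul_nonneg (pow_nonneg hq0 4) (by linarith : (0:ℝ) ≤ q - 10)]
  have p87 : 10 * q^7 ≤ q^8 := by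
    nlinarith [mul_nonneg (pow_nonneg hq0 7) (by linarith : (0:ℝ) ≤ q - 10)]
  have q4 : (0:ℝ) < q^4 := pow_pos (by linarith) 4
  have hD : 2*q^2*(q^2 + 8/5*q)^2 ≤ n * q^2 * (16/5*q + q^2 + 64/25*q^2) := by
    have h1 : q^3 * (q^2 * (16/5*q + q^2 + 64/25*q^2)) ≤ n * (q^2 * (16/5*q + q^2 + 64/25*q^2)) :=
      mul_le_mul_of_nonneg_right hqn (by positivity)
    linarith [h1, p76, p65, p54, q4]
  have hX : 0 ≤ (n - q^3) * (71/50 * q^5 + 49/25 * q^4) :=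
    mul_nonneg (by linarith) (by positivity)
  have hY : 0 ≤ (q/2 - t) * (n * q^2 * (16/5*q + q^2 + 64/25*q^2)
      - 2*q^2*(q^2 + 8/5*q)^2) :=
    mul_nonneg (by linarith) (by linarith)
  have hF0 : 0 < 21/50 * q^8 - 86/25 * q^7 - 98/25 * q^6 + 64/25 * q^5 + q^4 := by
    linarith [p87, p76, p65, p54, q4]
  intro H
  linarith [H, hX, hY, hF0]

set_option maxHeartbeats 1000000 in
/-- For every `ε > 0` there exists `N` such that for all `n ≥ N`:
if `G` is a `d`-regular simple graph on `n` vertices with `1 ≤ d ≤ n^(2/3)`, then the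
second largest eigenvalue `λ₂` of the adjacency matrix of `G` satisfies
`λ₂ ≥ (1 - ε) · √d / 2`. Here `μ` lists the eigenvalues of the adjacency matrix in
decreasing order, so `λ₂ = μ 1`. -/
theorem stmt_0 (ε : ℝ) (hε : 0 < ε) :
    ∃ N : ℕ, ∀ n : ℕ, N ≤ n → ∀ (hn : 2 ≤ n) (d : ℕ) (G : SimpleGraph (Fin n))
      (hA : (G.adjMatrix ℝ).IsHermitian) (μ : Fin n → ℝ),
      Antitone μ →
      (∃ σ : Equiv.Perm (Fin n), μ = hA.eigenvalues ∘ σ) →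
      G.IsRegularOfDegree d →
      1 ≤ d → (d : ℝ) ≤ (n : ℝ) ^ ((2 : ℝ) / 3) →
      μ ⟨1, by omega⟩ ≥ (1 - ε) * Real.sqrt d / 2 := by
  classical
  refine ⟨20000, fun n hn20000 hn d G hA μ hmono hperm hreg hd1 hd23 => ?_⟩
  obtain ⟨σ, hμ⟩ := hperm
  by_contra hcon
  push_neg at hcon
  set A := G.adjMatrix ℝ with hAdef
  set dR : ℝ := (d : ℝ) with hdR
  set q : ℝ := Real.sqrt d with hqdef
  set i0 : Fin n := ⟨0, by omega⟩ with hi0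
  set i1 : Fin n := ⟨1, by omega⟩ with hi1
  set t : ℝ := μ i1 with htdef
  set a : ℝ := 8/5 * q with hadef
  -- basic facts about q
  have hdR1 : (1:ℝ) ≤ dR := by rw [hdR]; exact_mod_cast hd1
  have hq0 : 0 ≤ q := Real.sqrt_nonneg _
  have hq2 : q ^ 2 = dR := Real.sq_sqrt (by positivity)
  have hq1 : 1 ≤ q := by nlinarith
  have ha0 : 0 ≤ a := by positivity
  -- q^3 ≤ n
  have hn0 : (0:ℝ) ≤ (n:ℝ) := Nat.cast_nonneg n
  have hqn : q ^ 3 ≤ (n : ℝ) := by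
    have h1 : dR ^ 3 ≤ ((n:ℝ) ^ ((2:ℝ)/3)) ^ 3 := by
      apply pow_le_pow_left₀ (by positivity) hd23
    have h2 : ((n:ℝ) ^ ((2:ℝ)/3)) ^ 3 = (n:ℝ) ^ 2 := by
      rw [← Real.rpow_natCast ((n:ℝ) ^ ((2:ℝ)/3)) 3, ← Real.rpow_mul hn0]
      norm_num
    refine le_of_pow_le_pow_left₀ (two_ne_zero) hn0 ?_
    calc (q ^ 3) ^ 2 = (q ^ 2) ^ 3 := by ring
      _ = dR ^ 3 := by rw [hq2]
      _ ≤ (n:ℝ) ^ 2 := h2 ▸ h1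
  -- eigenvalue bounds
  have habs : ∀ i : Fin n, |μ i| ≤ dR := by
    intro i
    rw [hμ]
    exact eig_abs_le hA hreg (σ i)
  -- sums of powers = traces
  have hSk : ∀ k : ℕ, ∑ i, μ i ^ k = (A ^ k).trace := by
    intro k
    rw [hμ]
    simp only [Function.comp_apply]
    rw [Equiv.sum_comp σ (fun j => hA.eigenvalues j ^ k)]
    exact (trace_pow_eq_sum_eigenvalues hA k).symm
  have hS1 : ∑ i, μ i = 0 := by
    have h := hSk 1
    simp only [pow_one] at h
    rw [h, hAdef, SimpleGraph.trace_adjMatrix]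
  have hS2 : ∑ i, μ i ^ 2 = (n:ℝ) * dR := by
    rw [hSk 2]
    exact trace_adj_sq hreg
  have hS3 : (0:ℝ) ≤ ∑ i, μ i ^ 3 := by
    rw [hSk 3]
    exact trace_adj_cube_nonneg
  have hS4 : (n:ℝ) * dR ^ 2 + (dR ^ 2 - dR) ^ 2 ≤ ∑ i, μ i ^ 4 := by
    rw [hSk 4]
    exact trace_adj_pow4_ge hn hreg
  -- t bounds
  have ht_le_d : t ≤ dR := le_trans (le_abs_self _) (habs i1)
  have ht_ge : -dR ≤ t := neg_le_of_abs_le (habs i1)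
  have ht0 : t ≤ μ i0 := hmono (show i0 ≤ i1 by rw [Fin.mk_le_mk]; omega)
  have htq : t < q / 2 := by
    have h1 : (1 - ε) * q / 2 ≤ q / 2 := by nlinarith
    calc t < (1 - ε) * Real.sqrt d / 2 := hcon
      _ = (1 - ε) * q / 2 := rfl
      _ ≤ q / 2 := h1
  -- polynomial expansion and bound
  have hexpand : ∀ x : ℝ, (x - t) * (x + dR) * (x + a) ^ 2
      = x ^ 4 + (2*a + dR - t) * x ^ 3 + (a^2 + 2*a*(dR - t) - t*dR) * x ^ 2
        + ((dR - t)*a^2 - 2*a*t*dR) * x + (-(a^2) * t * dR) := fun x => by ring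
  have hsum_eq : ∑ i, ((μ i - t) * (μ i + dR) * (μ i + a) ^ 2)
      = (∑ i, μ i ^ 4) + (2*a + dR - t) * (∑ i, μ i ^ 3)
        + (a^2 + 2*a*(dR - t) - t*dR) * (∑ i, μ i ^ 2)
        + ((dR - t)*a^2 - 2*a*t*dR) * (∑ i, μ i) + (n:ℝ) * (-(a^2) * t * dR) := by
    rw [Finset.sum_congr rfl fun i _ => hexpand (μ i)]
    rw [Finset.sum_add_distrib, Finset.sum_add_distrib, Finset.sum_add_distrib,
      Finset.sum_add_distrib, ← Finset.mul_sum, ← Finset.mul_sum, ← Finset.mul_sum,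
      Finset.sum_const, Finset.card_univ, Fintype.card_fin, nsmul_eq_mul]
  have hsum_le : ∑ i, ((μ i - t) * (μ i + dR) * (μ i + a) ^ 2)
      ≤ (dR - t) * (2*dR) * (dR + a) ^ 2 := by
    rw [← Finset.add_sum_erase _ _ (Finset.mem_univ i0)]
    have hrest : ∑ i ∈ Finset.univ.erase i0, ((μ i - t) * (μ i + dR) * (μ i + a) ^ 2) ≤ 0 := by
      refine Finset.sum_nonpos fun i hi => ?_
      have hne : i ≠ i0 := Finset.ne_of_mem_erase hi
      have hval : (i : ℕ) ≠ 0 := by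
        intro h
        exact hne (Fin.ext (by simp [hi0, h]))
      have hi1le : i1 ≤ i := by rw [Fin.le_def]; simp [hi1]; omega
      have hle : μ i ≤ t := hmono hi1le
      have hge : -dR ≤ μ i := neg_le_of_abs_le (habs i)
      have h1 : (μ i - t) * (μ i + dR) ≤ 0 :=
        mul_nonpos_of_nonpos_of_nonneg (by linarith) (by linarith)
      exact mul_nonpos_of_nonpos_of_nonneg h1 (sq_nonneg _)
    have htop : (μ i0 - t) * (μ i0 + dR) * (μ i0 + a) ^ 2
        ≤ (dR - t) * (2*dR) * (dR + a) ^ 2 := by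
      have h1 : -dR ≤ μ i0 := neg_le_of_abs_le (habs i0)
      have h2 : μ i0 ≤ dR := le_trans (le_abs_self _) (habs i0)
      have e5 : (μ i0 + a) ^ 2 ≤ (dR + a) ^ 2 := by nlinarith
      have e6 : 0 ≤ (μ i0 - t) * (μ i0 + dR) := mul_nonneg (by linarith) (by linarith)
      have e7 : (μ i0 - t) * (μ i0 + dR) ≤ (dR - t) * (2*dR) := by nlinarith
      calc (μ i0 - t) * (μ i0 + dR) * (μ i0 + a) ^ 2
          ≤ (μ i0 - t) * (μ i0 + dR) * (dR + a) ^ 2 :=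
            mul_le_mul_of_nonneg_left e5 e6
        _ ≤ (dR - t) * (2*dR) * (dR + a) ^ 2 :=
            mul_le_mul_of_nonneg_right e7 (sq_nonneg _)
    linarith
  -- master inequality
  have hc3 : 0 ≤ 2*a + dR - t := by linarith
  have e2 : (a^2 + 2*a*(dR - t) - t*dR) * (∑ i, μ i ^ 2)
      = (a^2 + 2*a*(dR - t) - t*dR) * ((n:ℝ) * dR) := by rw [hS2]
  have e1 : ((dR - t)*a^2 - 2*a*t*dR) * (∑ i, μ i) = 0 := by rw [hS1]; ring
  have e3 : 0 ≤ (2*a + dR - t) * (∑ i, μ i ^ 3) := mul_nonneg hc3 hS3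
  have H : (n:ℝ) * dR ^ 2 + (dR ^ 2 - dR) ^ 2
      + (a^2 + 2*a*(dR - t) - t*dR) * ((n:ℝ) * dR) + (n:ℝ) * (-(a^2) * t * dR)
      ≤ (dR - t) * (2*dR) * (dR + a) ^ 2 := by
    rw [hsum_eq] at hsum_le
    linarith
  rw [← hq2] at H
  have ht_ge' : -(q^2) ≤ t := by rw [hq2]; exact ht_ge
  have htq2 : t ≤ q / 2 := le_of_lt htq
  rw [hadef] at H
  rcases le_or_gt d 99 with hd99 | hd100
  · have hq99 : q ^ 2 ≤ 99 := by rw [hq2, hdR]; exact_mod_cast hd99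
    have hn2 : (20000:ℝ) ≤ (n:ℝ) := by exact_mod_cast hn20000
    exact caseA_aux hq0 hq1 hn0 hq99 hn2 htq2 ht_ge' (by linarith [H])
  · have hd100' : (100:ℝ) ≤ q ^ 2 := by
      rw [hq2, hdR]
      exact_mod_cast hd100
    exact caseB_aux hq0 hn0 hd100' hqn htq2 ht_ge' (by linarith [H])
end

section
/- Let G be a d-regular simple graph on n vertices with 1 ≤ d, let A be its adjacency matrix, let λ₂ ≥ 0 be the second largest eigenvalue of A, set p = d/n, α = p/(λ₂ + p) and β = 1/(λ₂ + p). Then the real symmetric matrix M = (1 − α)·I − β·A + α·J, where I is the n×n identity matrix and J is the n×n all-ones matrix, is positive semidefinite. -/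
open Matrix Finset

namespace Stmt11Aux

variable {n d : ℕ}

variable {n d : ℕ}

lemma inner_eq_dot {m : ℕ} (x z : EuclideanSpace ℝ (Fin m)) :
    (inner ℝ x z : ℝ) = dotProduct (⇑x) (⇑z) := by
  simp [EuclideanSpace.inner_eq_star_dotProduct, dotProduct, mul_comm]

lemma rayleigh (G : SimpleGraph (Fin n)) [DecidableRel G.Adj]
    (hreg : G.IsRegularOfDegree d) (x : Fin n → ℝ) :
    x ⬝ᵥ (G.adjMatrix ℝ *ᵥ x) ≤ d * (x ⬝ᵥ x) := by
  have key : ∀ i : Fin n, ∀ c : ℝ, (∑ j, if G.Adj i j then c else 0) = d * c := by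
    intro i c
    rw [← Finset.sum_filter, ← SimpleGraph.neighborFinset_eq_filter, Finset.sum_const,
      nsmul_eq_mul, show (G.neighborFinset i).card = d from hreg i]
  rw [SimpleGraph.dotProduct_mulVec_adjMatrix]
  calc ∑ i, ∑ j, (if G.Adj i j then x i * x j else 0)
      ≤ ∑ i, ∑ j, ((if G.Adj i j then x i ^ 2 / 2 else 0)
          + (if G.Adj i j then x j ^ 2 / 2 else 0)) := by
        apply Finset.sum_le_sum; intro i _
        apply Finset.sum_le_sum; intro j _
        by_cases h : G.Adj i j <;> simp [h] <;> nlinarith [sq_nonneg (x i - x j)]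
    _ = (∑ i : Fin n, (d : ℝ) * (x i ^ 2 / 2)) + ∑ j : Fin n, (d : ℝ) * (x j ^ 2 / 2) := by
        simp only [Finset.sum_add_distrib]
        congr 1
        · exact Finset.sum_congr rfl fun i _ => key i _
        · rw [Finset.sum_comm]
          refine Finset.sum_congr rfl fun j _ => ?_
          rw [← key j (x j ^ 2 / 2)]
          exact Finset.sum_congr rfl fun i _ => if_congr (G.adj_comm i j) rfl rfl
    _ = d * (x ⬝ᵥ x) := by
        rw [dotProduct, Finset.mul_sum, ← Finset.sum_add_distrib]
        exact Finset.sum_congr rfl fun i _ => by ring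

lemma eig_le (G : SimpleGraph (Fin n)) [DecidableRel G.Adj]
    (hreg : G.IsRegularOfDegree d) (hA : (G.adjMatrix ℝ).IsHermitian) (i : Fin n) :
    hA.eigenvalues i ≤ d := by
  set v := hA.eigenvectorBasis i with hv
  have h1 : G.adjMatrix ℝ *ᵥ ⇑v = hA.eigenvalues i • ⇑v := hA.mulVec_eigenvectorBasis i
  have hvv : dotProduct (⇑v) (⇑v) = 1 := by
    have hnorm : ‖v‖ = 1 := hA.eigenvectorBasis.orthonormal.1 i
    have h2 : (inner ℝ v v : ℝ) = 1 := by rw [real_inner_self_eq_norm_sq, hnorm]; norm_num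
    rw [← inner_eq_dot]; exact h2
  have h3 := rayleigh G hreg ⇑v
  rw [h1, dotProduct_smul, smul_eq_mul, hvv] at h3
  simpa using h3


lemma spectral_bound (hn : 2 ≤ n) (G : SimpleGraph (Fin n)) [DecidableRel G.Adj]
    (hreg : G.IsRegularOfDegree d) (hA : (G.adjMatrix ℝ).IsHermitian)
    (μ : Fin n → ℝ) (hμ : Antitone μ)
    (σ : Equiv.Perm (Fin n)) (hσ : μ = hA.eigenvalues ∘ σ)
    (eig_le : ∀ i, hA.eigenvalues i ≤ d)
    (y : Fin n → ℝ) (hy : ∑ i, y i = 0) :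
    y ⬝ᵥ (G.adjMatrix ℝ *ᵥ y) ≤ μ ⟨1, by omega⟩ * (y ⬝ᵥ y) := by
  set A := G.adjMatrix ℝ with hAdef
  set b := hA.eigenvectorBasis with hb
  set ε := hA.eigenvalues with hε
  set k0 : Fin n := ⟨0, by omega⟩ with hk0
  set k1 : Fin n := ⟨1, by omega⟩ with hk1
  have hdotA : ∀ (i : Fin n) (z : Fin n → ℝ),
      (⇑(b i)) ⬝ᵥ (A *ᵥ z) = ε i * ((⇑(b i)) ⬝ᵥ z) := by
    intro i z
    rw [dotProduct_mulVec, ← Matrix.mulVec_transpose,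
      ← Matrix.conjTranspose_eq_transpose_of_trivial, hA.eq,
      hA.mulVec_eigenvectorBasis i, smul_dotProduct, smul_eq_mul]
  have hexp : ∀ x z : Fin n → ℝ,
      ∑ i, ((⇑(b i)) ⬝ᵥ x) * ((⇑(b i)) ⬝ᵥ z) = x ⬝ᵥ z := by
    intro x z
    have h := b.sum_inner_mul_inner (WithLp.toLp 2 x : EuclideanSpace ℝ (Fin n)) (WithLp.toLp 2 z : EuclideanSpace ℝ (Fin n))
    have e1 : @inner ℝ (EuclideanSpace ℝ (Fin n)) _ (WithLp.toLp 2 x) (WithLp.toLp 2 z) = x ⬝ᵥ z := by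
      simp [PiLp.inner_apply, dotProduct, RCLike.inner_apply, mul_comm]
    have e2 : ∀ i, @inner ℝ (EuclideanSpace ℝ (Fin n)) _ (WithLp.toLp 2 x) (b i) = (⇑(b i)) ⬝ᵥ x := by
      intro i
      simp [PiLp.inner_apply, dotProduct, RCLike.inner_apply, mul_comm]
    have e3 : ∀ i, @inner ℝ (EuclideanSpace ℝ (Fin n)) _ (b i) (WithLp.toLp 2 z) = (⇑(b i)) ⬝ᵥ z := by
      intro i
      simp [PiLp.inner_apply, dotProduct, RCLike.inner_apply, mul_comm]
    rw [e1] at h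
    rw [← h]
    exact Finset.sum_congr rfl fun i _ => by rw [e2 i, e3 i]
  set c : Fin n → ℝ := fun i => (⇑(b i)) ⬝ᵥ y with hc
  have hParseval : y ⬝ᵥ y = ∑ i, c i * c i := (hexp y y).symm
  have hRQ : y ⬝ᵥ (A *ᵥ y) = ∑ i, ε i * (c i * c i) := by
    rw [← hexp y (A *ᵥ y)]
    refine Finset.sum_congr rfl fun i _ => ?_
    rw [hdotA i y]; ring
  have hεle : ∀ j, ε j ≤ μ k0 := by
    intro j
    have h1 : μ (σ.symm j) = ε j := by rw [hσ]; simp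
    rw [← h1]; exact hμ (show k0 ≤ σ.symm j from Nat.zero_le _)
  rcases le_or_gt (μ k0) (μ k1) with hcase | hcase
  · rw [hRQ, hParseval, Finset.mul_sum]
    refine Finset.sum_le_sum fun i _ => ?_
    exact mul_le_mul_of_nonneg_right (le_trans (hεle i) hcase) (mul_self_nonneg _)
  · set i₀ := σ k0 with hi₀
    have hmu0d : μ k0 ≤ (d : ℝ) := by rw [hσ]; exact eig_le _
    have hlt : ∀ j, j ≠ i₀ → ε j ≤ μ k1 := by
      intro j hj
      have h2 : μ (σ.symm j) = ε j := by rw [hσ]; simp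
      rw [← h2]; apply hμ
      have h3 : σ.symm j ≠ k0 := by
        intro h; apply hj; rw [hi₀, ← h]; simp
      rw [Fin.le_def]
      have := Fin.val_ne_of_ne h3
      simp only [hk0, hk1] at this ⊢
      omega
    set u : Fin n → ℝ := fun _ => 1 with hu
    have hAu : A *ᵥ u = (d : ℝ) • u := by
      funext v
      have hdeg : (G.neighborFinset v).card = d := hreg v
      show (A *ᵥ u) v = ((d : ℝ) • u) v
      rw [hAdef, SimpleGraph.adjMatrix_mulVec_apply]
      simp [hu, Finset.sum_const, hdeg]
    have hbu : ∀ j, j ≠ i₀ → (⇑(b j)) ⬝ᵥ u = 0 := by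
      intro j hj
      have h1 : (⇑(b j)) ⬝ᵥ (A *ᵥ u) = ε j * ((⇑(b j)) ⬝ᵥ u) := hdotA j u
      rw [hAu, dotProduct_smul, smul_eq_mul] at h1
      have hne : ε j - (d : ℝ) ≠ 0 := by
        have h4 := lt_of_le_of_lt (hlt j hj) (lt_of_lt_of_le hcase hmu0d)
        intro h; rw [sub_eq_zero] at h; exact absurd h (ne_of_lt h4)
      have h2 : (ε j - (d : ℝ)) * ((⇑(b j)) ⬝ᵥ u) = 0 := by ring_nf; linarith
      rcases mul_eq_zero.mp h2 with h | h
      · exact absurd h hne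
      · exact h
    have huy : u ⬝ᵥ y = 0 := by simp [hu, dotProduct, hy]
    have huu : u ⬝ᵥ u = (n : ℝ) := by simp [hu, dotProduct]
    have hi0u : (⇑(b i₀)) ⬝ᵥ u ≠ 0 := by
      intro h0
      have h1 := hexp u u
      rw [huu] at h1
      have hz : ∑ i, ((⇑(b i)) ⬝ᵥ u) * ((⇑(b i)) ⬝ᵥ u) = 0 :=
        Finset.sum_eq_zero fun j _ => by
          by_cases hji : j = i₀
          · rw [hji, h0, mul_zero]
          · rw [hbu j hji, zero_mul]
      rw [hz] at h1
      have hn0 : (0 : ℝ) < (n : ℝ) := by exact_mod_cast (by omega : 0 < n)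
      linarith
    have hci0 : c i₀ = 0 := by
      have h1 : ∑ j, ((⇑(b j)) ⬝ᵥ u) * ((⇑(b j)) ⬝ᵥ y) = u ⬝ᵥ y := hexp u y
      rw [huy, Finset.sum_eq_single i₀] at h1
      · exact (mul_eq_zero.mp h1).resolve_left hi0u
      · intro j _ hj; rw [hbu j hj, zero_mul]
      · intro h; exact absurd (Finset.mem_univ i₀) h
    rw [hRQ, hParseval, Finset.mul_sum]
    refine Finset.sum_le_sum fun i _ => ?_
    by_cases hii : i = i₀
    · rw [hii, hci0]; simp
    · exact mul_le_mul_of_nonneg_right (hlt i hii) (mul_self_nonneg _)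

end Stmt11Aux

/-- Let `G` be a `d`-regular simple graph on `n ≥ 2` vertices with
`1 ≤ d`, let `A` be its adjacency matrix, let `λ₂ = μ 1 ≥ 0` be its second largest
eigenvalue (where `μ` lists the eigenvalues in decreasing order), and set `p = d/n`,
`α = p/(λ₂ + p)`, `β = 1/(λ₂ + p)`. Then the matrix `M = (1 − α)·I − β·A + α·J`
(with `J` the all-ones matrix) is positive semidefinite. -/
theorem stmt_11 (n d : ℕ) (hn : 2 ≤ n) (hd : 1 ≤ d)
    (G : SimpleGraph (Fin n)) [DecidableRel G.Adj]
    (hreg : G.IsRegularOfDegree d)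
    (hA : (G.adjMatrix ℝ).IsHermitian)
    (μ : Fin n → ℝ) (hμ : Antitone μ)
    (hperm : ∃ σ : Equiv.Perm (Fin n), μ = hA.eigenvalues ∘ σ)
    (hmu2 : 0 ≤ μ ⟨1, by omega⟩)
    (p α β : ℝ)
    (hp : p = (d : ℝ) / n)
    (hα : α = p / (μ ⟨1, by omega⟩ + p))
    (hβ : β = 1 / (μ ⟨1, by omega⟩ + p)) :
    ((1 - α) • (1 : Matrix (Fin n) (Fin n) ℝ) - β • G.adjMatrix ℝ
        + α • Matrix.of (fun _ _ => (1 : ℝ))).PosSemidef := by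
  obtain ⟨σ, hσ⟩ := hperm
  have spectral : ∀ y : Fin n → ℝ, (∑ i, y i = 0) →
      y ⬝ᵥ (G.adjMatrix ℝ *ᵥ y) ≤ μ ⟨1, by omega⟩ * (y ⬝ᵥ y) :=
    fun y hy => Stmt11Aux.spectral_bound hn G hreg hA μ hμ σ hσ
      (Stmt11Aux.eig_le G hreg hA) y hy
  set A := G.adjMatrix ℝ with hAdef
  set lam : ℝ := μ ⟨1, by omega⟩ with hlam
  have hAT : Aᵀ = A := (Matrix.conjTranspose_eq_transpose_of_trivial A).symm.trans hA.eq
  have hJT : (Matrix.of (fun _ _ => (1 : ℝ)) : Matrix (Fin n) (Fin n) ℝ)ᵀ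
      = Matrix.of (fun _ _ => (1 : ℝ)) := by ext i j; rfl
  refine Matrix.posSemidef_iff_dotProduct_mulVec.mpr ⟨?_, ?_⟩
  · show _ᴴ = _
    rw [Matrix.conjTranspose_eq_transpose_of_trivial, Matrix.transpose_add,
      Matrix.transpose_sub, Matrix.transpose_smul, Matrix.transpose_smul,
      Matrix.transpose_smul, Matrix.transpose_one, hAT, hJT]
  · intro x
    have hn0 : (0 : ℝ) < n := by exact_mod_cast (by omega : 0 < n)
    have hd0 : (0 : ℝ) < d := by exact_mod_cast hd
    have hp0 : 0 < p := by rw [hp]; positivity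
    have hlam0 : 0 ≤ lam := hmu2
    have hD : 0 < lam + p := by linarith
    have hβ0 : 0 ≤ β := by rw [hβ]; positivity
    have e1 : 1 - α = β * lam := by
      rw [hα, hβ]; field_simp
      ring
    have e2 : α * n = β * d := by
      have h' : lam + (d : ℝ) / n ≠ 0 := by rw [← hp]; exact hD.ne'
      rw [hα, hβ, hp]; field_simp
    set s := ∑ i, x i with hs
    set t := s / (n : ℝ) with ht
    set u : Fin n → ℝ := fun _ => 1 with hu
    set y : Fin n → ℝ := fun i => x i - t with hyd
    have hy : ∑ i, y i = 0 := by
      have h1 : ∑ i, y i = s - n * t := by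
        simp [hyd, Finset.sum_sub_distrib, Finset.sum_const, nsmul_eq_mul, hs]
      rw [h1, ht]; field_simp
      ring
    have hxeq : x = y + t • u := by
      funext i; simp [hyd, hu]
    have hAu : A *ᵥ u = (d : ℝ) • u := by
      funext v
      have hdeg : (G.neighborFinset v).card = d := hreg v
      show (A *ᵥ u) v = ((d : ℝ) • u) v
      rw [hAdef, SimpleGraph.adjMatrix_mulVec_apply]
      simp [hu, Finset.sum_const, hdeg]
    have huy : u ⬝ᵥ y = 0 := by simp [hu, dotProduct, hy]
    have hyu : y ⬝ᵥ u = 0 := by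
      have : y ⬝ᵥ u = ∑ i, y i := by simp [hu, dotProduct]
      rw [this, hy]
    have huu : u ⬝ᵥ u = (n : ℝ) := by simp [hu, dotProduct]
    have huAy : u ⬝ᵥ (A *ᵥ y) = 0 := by
      rw [dotProduct_mulVec, ← Matrix.mulVec_transpose,
        ← Matrix.conjTranspose_eq_transpose_of_trivial, hA.eq, hAu,
        smul_dotProduct, huy, smul_zero]
    have hAx : A *ᵥ x = A *ᵥ y + (t * d) • u := by
      rw [hxeq, Matrix.mulVec_add, Matrix.mulVec_smul, hAu, smul_smul, mul_comm]
    have hxx : x ⬝ᵥ x = y ⬝ᵥ y + t * t * n := by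
      rw [hxeq]
      simp only [dotProduct_add, add_dotProduct, dotProduct_smul,
        smul_dotProduct, smul_eq_mul, hyu, huy, huu]
      ring
    have hxAx : x ⬝ᵥ (A *ᵥ x) = y ⬝ᵥ (A *ᵥ y) + t * t * ((d : ℝ) * n) := by
      rw [hAx, hxeq]
      simp only [dotProduct_add, add_dotProduct, dotProduct_smul,
        smul_dotProduct, smul_eq_mul, hyu, huy, huu, huAy]
      ring
    have hspec : y ⬝ᵥ (A *ᵥ y) ≤ lam * (y ⬝ᵥ y) := spectral y hy
    have hJ : (Matrix.of (fun _ _ => (1 : ℝ)) : Matrix (Fin n) (Fin n) ℝ) *ᵥ x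
        = fun _ => s := by
      funext v; simp [Matrix.mulVec, dotProduct, hs]
    have hxs : x ⬝ᵥ (fun _ => s) = s * s := by
      simp [dotProduct, ← Finset.sum_mul, hs]
    have hQ : star x ⬝ᵥ (((1 - α) • (1 : Matrix (Fin n) (Fin n) ℝ) - β • A
        + α • Matrix.of (fun _ _ => (1 : ℝ))) *ᵥ x)
        = (1 - α) * (x ⬝ᵥ x) - β * (x ⬝ᵥ (A *ᵥ x)) + α * (s * s) := by
      rw [star_trivial, Matrix.add_mulVec, Matrix.sub_mulVec, Matrix.smul_mulVec,
        Matrix.smul_mulVec, Matrix.smul_mulVec, Matrix.one_mulVec, hJ,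
        dotProduct_add, dotProduct_sub, dotProduct_smul,
        dotProduct_smul, dotProduct_smul, smul_eq_mul, smul_eq_mul,
        smul_eq_mul, hxs]
    rw [hQ, hxx, hxAx]
    have hsn : s = t * n := by rw [ht]; field_simp
    have hid : (1 - α) * (y ⬝ᵥ y + t * t * n) - β * (y ⬝ᵥ (A *ᵥ y) + t * t * ((d : ℝ) * n))
        + α * (s * s)
        = β * (lam * (y ⬝ᵥ y) - y ⬝ᵥ (A *ᵥ y)) + (t * t) * ((n : ℝ) * (β * lam)) := by
      rw [hsn]
      linear_combination (y ⬝ᵥ y + t * t * (n : ℝ)) * e1 + t * t * (n : ℝ) * e2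
    rw [hid]
    have h1 : 0 ≤ β * (lam * (y ⬝ᵥ y) - y ⬝ᵥ (A *ᵥ y)) :=
      mul_nonneg hβ0 (by linarith)
    have h2 : 0 ≤ (t * t) * ((n : ℝ) * (β * lam)) :=
      mul_nonneg (mul_self_nonneg t) (mul_nonneg hn0.le (mul_nonneg hβ0 hlam0))
    linarith
end
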